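/- Let f : X → ℝ be bounded and measurable. If ‖E[f | 𝒞_{<V}]‖_{L²(μ)} > 0, then ‖f‖_{□^V} > 0. -/

import Mathlib

open MeasureTheory

/-- The Gowers box integral `∫_{X⁺} ∏_{ω ∈ {0,1}^V} f(x^ω) dμ⁺`. -/
noncomputable def boxInt {V : Type} [Fintype V] [DecidableEq V]
    (X : V → Type) [∀ v, MeasurableSpace (X v)] (μ : ∀ v, Measure (X v))
    (f : (∀ v, X v) → ℝ) : ℝ :=
  ∫ x : ∀ p : V × Bool, X p.1,
    ∏ ω : V → Bool, f (fun v => x (v, ω v))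
    ∂(Measure.pi fun p : V × Bool => μ p.1)

/-- The Gowers box seminorm `‖f‖_{□^V} = (boxInt f)^{1/2^{|V|}}`. -/
noncomputable def boxNorm {V : Type} [Fintype V] [DecidableEq V]
    (X : V → Type) [∀ v, MeasurableSpace (X v)] (μ : ∀ v, Measure (X v))
    (f : (∀ v, X v) → ℝ) : ℝ :=
  (boxInt X μ f) ^ ((1 : ℝ) / 2 ^ Fintype.card V)

/-- The σ-algebra `𝒞_I` on `X = ∏_v X_v` of sets depending only on the coordinates in `I`. -/
def cylAlg {V : Type} (X : V → Type) [∀ v, MeasurableSpace (X v)] (I : Set V) :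
    MeasurableSpace (∀ v, X v) :=
  MeasurableSpace.comap (fun (x : ∀ v, X v) (i : ↥I) => x ↑i) MeasurableSpace.pi

/-- The σ-algebra `𝒞_{<V}` generated by `⋃_{I ⊊ V} 𝒞_I`. -/
def cylAlgLt {V : Type} (X : V → Type) [∀ v, MeasurableSpace (X v)] :
    MeasurableSpace (∀ v, X v) :=
  ⨆ (I : Set V) (_ : I ≠ Set.univ), cylAlg X I

set_option linter.unusedSectionVars false

namespace BoxAux

variable {V : Type} [Fintype V] [DecidableEq V]
variable {X : V → Type} [∀ v, MeasurableSpace (X v)]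

/-- Selection map: from a doubled point, get the point given by a pattern `ω`. -/
def sel (x : ∀ p : V × Bool, X p.1) (ω : V → Bool) : ∀ v, X v := fun v => x (v, ω v)

lemma measurable_sel (ω : V → Bool) :
    Measurable (fun x : ∀ p : V × Bool, X p.1 => sel x ω) :=
  measurable_pi_lambda _ fun v => measurable_pi_apply (v, ω v)

/-- Patterns supported in `S`. -/
def Om (S : Finset V) : Finset (V → Bool) :=
  Finset.univ.filter fun ω => ∀ v, v ∉ S → ω v = false

lemma mem_Om {S : Finset V} {ω : V → Bool} : ω ∈ Om S ↔ ∀ v, v ∉ S → ω v = false := by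
  simp [Om]

lemma Om_empty : Om (∅ : Finset V) = {fun _ => false} := by
  ext ω
  simp only [mem_Om, Finset.mem_singleton]
  constructor
  · intro h; funext v; exact h v (by simp)
  · intro h v _; rw [h]

lemma Om_univ : Om (Finset.univ : Finset V) = Finset.univ := by
  ext ω; simp [mem_Om]

lemma Om_insert {S : Finset V} {u₀ : V} (hu₀ : u₀ ∉ S) :
    Om (insert u₀ S) = Om S ∪ (Om S).image (fun ω => Function.update ω u₀ true) := by
  ext ω
  simp only [mem_Om, Finset.mem_union, Finset.mem_image]
  constructor
  · intro h
    by_cases hω : ω u₀ = false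
    · left; intro v hv
      by_cases hvu : v = u₀
      · subst hvu; exact hω
      · exact h v (by simp [hvu, hv])
    · right
      refine ⟨Function.update ω u₀ false, ?_, ?_⟩
      · intro v hv
        by_cases hvu : v = u₀
        · subst hvu; simp
        · rw [Function.update_of_ne hvu]; exact h v (by simp [hvu, hv])
      · funext v
        by_cases hvu : v = u₀
        · subst hvu; simp only [ne_eq, Bool.not_eq_false] at hω; simp [hω]
        · simp [Function.update_of_ne hvu]
  · intro h v hv
    have hvS : v ∉ S := fun hc => hv (Finset.mem_insert_of_mem hc)
    have hvu : v ≠ u₀ := fun hc => hv (hc ▸ Finset.mem_insert_self u₀ S)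
    rcases h with h | ⟨ω', h', rfl⟩
    · exact h v hvS
    · rw [Function.update_of_ne hvu]; exact h' v hvS

lemma mem_Om_false {S : Finset V} {u₀ : V} (hu₀ : u₀ ∉ S) {ω : V → Bool} (hω : ω ∈ Om S) :
    ω u₀ = false := mem_Om.mp hω u₀ hu₀

lemma prod_Om_insert {S : Finset V} {u₀ : V} (hu₀ : u₀ ∉ S) (F : (V → Bool) → ℝ) :
    ∏ η ∈ Om (insert u₀ S), F η =
      (∏ ω ∈ Om S, F ω) * ∏ ω ∈ Om S, F (Function.update ω u₀ true) := by
  rw [Om_insert hu₀, Finset.prod_union, Finset.prod_image]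
  · intro ω hω ω' hω' h
    funext v
    by_cases hvu : v = u₀
    · subst hvu
      rw [mem_Om_false hu₀ hω, mem_Om_false hu₀ hω']
    · have := congrFun h v
      dsimp only at this
      rwa [Function.update_of_ne hvu, Function.update_of_ne hvu] at this
  · rw [Finset.disjoint_left]
    intro ω hω hmem
    obtain ⟨ω', hω', rfl⟩ := Finset.mem_image.mp hmem
    have h2 : Function.update ω' u₀ true u₀ = true := by simp
    rw [mem_Om_false hu₀ hω] at h2
    exact Bool.false_ne_true h2

variable (μ : ∀ v, Measure (X v)) [∀ v, IsProbabilityMeasure (μ v)]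

/-- The weighted Cauchy–Schwarz chain quantity. -/
noncomputable def CC (f : (∀ v, X v) → ℝ) (u : V → (∀ v, X v) → ℝ) (S : Finset V) : ℝ :=
  ∫ x : ∀ p : V × Bool, X p.1,
    ∏ ω ∈ Om S, (f (sel x ω) * ∏ v ∈ Sᶜ, u v (sel x ω))
    ∂(Measure.pi fun p : V × Bool => μ p.1)

lemma integrable_of_bdd {α : Type*} [MeasurableSpace α] {ν : Measure α} [IsFiniteMeasure ν]
    {g : α → ℝ} {c : ℝ} (hm : Measurable g) (hb : ∀ x, |g x| ≤ c) : Integrable g ν :=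
  (integrable_const c).mono' hm.aestronglyMeasurable
    (Filter.Eventually.of_forall (by simpa [Real.norm_eq_abs] using hb))

lemma nonempty_of_prob {α : Type*} [MeasurableSpace α] (ν : Measure α)
    [IsProbabilityMeasure ν] : Nonempty α := by
  by_contra h
  rw [not_nonempty_iff] at h
  have h0 : ν Set.univ = 1 := measure_univ
  rw [Set.univ_eq_empty_iff.mpr h, measure_empty] at h0
  exact zero_ne_one h0

section Split

variable (u₀ : V)

/-- `Bool` indexes the two copies of the `u₀` coordinate. -/
def βe : Bool ≃ {q : V × Bool // q.1 = u₀} where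
  toFun b := ⟨(u₀, b), rfl⟩
  invFun q := q.1.2
  left_inv b := rfl
  right_inv q := by
    rcases q with ⟨⟨a, b⟩, h⟩
    subst h
    rfl

/-- The pair equivalence onto the coordinates above `u₀`. -/
noncomputable def Wpair : (X u₀ × X u₀) ≃ᵐ (∀ q : {q : V × Bool // q.1 = u₀}, X q.1.1) :=
  ((MeasurableEquiv.piFinTwo fun _ : Fin 2 => X u₀).symm.trans
    (MeasurableEquiv.piCongrLeft (fun _ : Bool => X u₀) finTwoEquiv)).trans
    (MeasurableEquiv.piCongrLeft (fun q : {q : V × Bool // q.1 = u₀} => X q.1.1) (βe u₀))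

/-- The full splitting equivalence. -/
noncomputable def E0 :
    ((∀ q : {q : V × Bool // ¬ q.1 = u₀}, X q.1.1) × (X u₀ × X u₀)) ≃ᵐ
      (∀ p : V × Bool, X p.1) :=
  MeasurableEquiv.prodComm.trans
    (((Wpair (X := X) u₀).prodCongr (MeasurableEquiv.refl _)).trans
      (MeasurableEquiv.piEquivPiSubtypeProd (fun q : V × Bool => X q.1)
        (fun q => q.1 = u₀)).symm)

lemma E0_mp :
    MeasurePreserving (E0 (X := X) u₀)
      ((Measure.pi fun q : {q : V × Bool // ¬ q.1 = u₀} => μ q.1.1).prod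
        ((μ u₀).prod (μ u₀)))
      (Measure.pi fun p : V × Bool => μ p.1) := by
  have mp1 : MeasurePreserving (MeasurableEquiv.piFinTwo fun _ : Fin 2 => X u₀).symm
      ((μ u₀).prod (μ u₀)) (Measure.pi fun _ : Fin 2 => μ u₀) :=
    (measurePreserving_piFinTwo fun _ : Fin 2 => μ u₀).symm _
  have mp2 := measurePreserving_piCongrLeft (fun _ : Bool => μ u₀) finTwoEquiv
  have mp3 := measurePreserving_piCongrLeft
    (fun q : {q : V × Bool // q.1 = u₀} => μ q.1.1) (βe u₀)
  have mpW : MeasurePreserving (Wpair (X := X) u₀) ((μ u₀).prod (μ u₀))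
      (Measure.pi fun q : {q : V × Bool // q.1 = u₀} => μ q.1.1) :=
    mp3.comp (mp2.comp mp1)
  have mpP := (measurePreserving_piEquivPiSubtypeProd
    (fun p : V × Bool => μ p.1) (fun q : V × Bool => q.1 = u₀)).symm
    (MeasurableEquiv.piEquivPiSubtypeProd (fun q : V × Bool => X q.1) (fun q => q.1 = u₀))
  have mpPr : MeasurePreserving
      (Prod.map (Wpair (X := X) u₀) (id : (∀ q : {q : V × Bool // ¬ q.1 = u₀}, X q.1.1) → _))
      (((μ u₀).prod (μ u₀)).prod (Measure.pi fun q : {q : V × Bool // ¬ q.1 = u₀} => μ q.1.1))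
      ((Measure.pi fun q : {q : V × Bool // q.1 = u₀} => μ q.1.1).prod
        (Measure.pi fun q : {q : V × Bool // ¬ q.1 = u₀} => μ q.1.1)) :=
    mpW.prod (MeasurePreserving.id _)
  have mpSwap := Measure.measurePreserving_swap
    (μ := (Measure.pi fun q : {q : V × Bool // ¬ q.1 = u₀} => μ q.1.1))
    (ν := (μ u₀).prod (μ u₀))
  exact mpP.comp (mpPr.comp mpSwap)

lemma E0_apply_ne (z : ∀ q : {q : V × Bool // ¬ q.1 = u₀}, X q.1.1) (tt : X u₀ × X u₀)
    (v : V) (b : Bool) (h : ¬ v = u₀) :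
    E0 (X := X) u₀ (z, tt) (v, b) = z ⟨(v, b), h⟩ := by
  show (Equiv.piEquivPiSubtypeProd (fun q : V × Bool => q.1 = u₀) (fun q : V × Bool => X q.1)).symm
    (Wpair (X := X) u₀ tt, z) (v, b) = z ⟨(v, b), h⟩
  rw [Equiv.piEquivPiSubtypeProd_symm_apply]
  exact dif_neg h

lemma E0_apply_false (z : ∀ q : {q : V × Bool // ¬ q.1 = u₀}, X q.1.1) (t t' : X u₀) :
    E0 (X := X) u₀ (z, (t, t')) (u₀, false) = t := by
  show (Equiv.piEquivPiSubtypeProd (fun q : V × Bool => q.1 = u₀) (fun q : V × Bool => X q.1)).symm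
    (Wpair (X := X) u₀ (t, t'), z) (u₀, false) = t
  rw [Equiv.piEquivPiSubtypeProd_symm_apply]
  rw [dif_pos rfl]
  show Wpair (X := X) u₀ (t, t') (βe u₀ false) = t
  show MeasurableEquiv.piCongrLeft (fun q : {q : V × Bool // q.1 = u₀} => X q.1.1) (βe u₀)
    (((MeasurableEquiv.piFinTwo fun _ : Fin 2 => X u₀).symm.trans
      (MeasurableEquiv.piCongrLeft (fun _ : Bool => X u₀) finTwoEquiv)) (t, t')) (βe u₀ false) = t
  refine (MeasurableEquiv.piCongrLeft_apply_apply (βe u₀)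
    (β := fun q : {q : V × Bool // q.1 = u₀} => X q.1.1) _ false).trans ?_
  show MeasurableEquiv.piCongrLeft (fun _ : Bool => X u₀) finTwoEquiv
    ((MeasurableEquiv.piFinTwo fun _ : Fin 2 => X u₀).symm (t, t')) (finTwoEquiv 0) = t
  rw [MeasurableEquiv.piCongrLeft_apply_apply]
  rfl

lemma E0_apply_true (z : ∀ q : {q : V × Bool // ¬ q.1 = u₀}, X q.1.1) (t t' : X u₀) :
    E0 (X := X) u₀ (z, (t, t')) (u₀, true) = t' := by
  show (Equiv.piEquivPiSubtypeProd (fun q : V × Bool => q.1 = u₀) (fun q : V × Bool => X q.1)).symm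
    (Wpair (X := X) u₀ (t, t'), z) (u₀, true) = t'
  rw [Equiv.piEquivPiSubtypeProd_symm_apply]
  rw [dif_pos rfl]
  show Wpair (X := X) u₀ (t, t') (βe u₀ true) = t'
  show MeasurableEquiv.piCongrLeft (fun q : {q : V × Bool // q.1 = u₀} => X q.1.1) (βe u₀)
    (((MeasurableEquiv.piFinTwo fun _ : Fin 2 => X u₀).symm.trans
      (MeasurableEquiv.piCongrLeft (fun _ : Bool => X u₀) finTwoEquiv)) (t, t')) (βe u₀ true) = t'
  refine (MeasurableEquiv.piCongrLeft_apply_apply (βe u₀)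
    (β := fun q : {q : V × Bool // q.1 = u₀} => X q.1.1) _ true).trans ?_
  show MeasurableEquiv.piCongrLeft (fun _ : Bool => X u₀) finTwoEquiv
    ((MeasurableEquiv.piFinTwo fun _ : Fin 2 => X u₀).symm (t, t')) (finTwoEquiv 1) = t'
  rw [MeasurableEquiv.piCongrLeft_apply_apply]
  rfl

end Split

lemma cs_aux {α : Type*} [MeasurableSpace α] {m : Measure α} [IsProbabilityMeasure m]
    {G Ψ : α → ℝ} (hG : Integrable G m) (hG2 : Integrable (fun z => G z * G z) m)
    (hΨG : Integrable (fun z => Ψ z * G z) m) (hΨ : ∀ z, |Ψ z| ≤ 1) :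
    (∫ z, Ψ z * G z ∂m) ^ 2 ≤ ∫ z, G z * G z ∂m := by
  set c := ∫ z, |G z| ∂m with hc
  have hc0 : 0 ≤ c := integral_nonneg fun z => abs_nonneg _
  have h1 : |∫ z, Ψ z * G z ∂m| ≤ c := by
    have habs := norm_integral_le_integral_norm (μ := m) (fun z => Ψ z * G z)
    simp only [Real.norm_eq_abs] at habs
    refine habs.trans ?_
    refine integral_mono hΨG.abs hG.abs fun z => ?_
    rw [abs_mul]
    exact mul_le_of_le_one_left (abs_nonneg _) (hΨ z)
  have h2 : c ^ 2 ≤ ∫ z, G z * G z ∂m := by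
    have hnn : (0:ℝ) ≤ ∫ z, (|G z| - c) ^ 2 ∂m := integral_nonneg fun z => sq_nonneg _
    have hi1 : Integrable (fun z => 2 * c * |G z|) m := hG.abs.const_mul _
    have hi2 : Integrable (fun z => G z * G z - 2 * c * |G z|) m := hG2.sub hi1
    have hexp : (fun z => (|G z| - c) ^ 2) =
        fun z => G z * G z - 2 * c * |G z| + c ^ 2 := by
      funext z
      have hz : |G z| ^ 2 = G z * G z := by rw [sq_abs]; ring
      nlinarith [hz]
    rw [hexp, integral_add hi2 (integrable_const _), integral_sub hG2 hi1,
      integral_const_mul, integral_const] at hnn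
    simp only [measure_univ, probReal_univ, ENNReal.toReal_one, one_smul, smul_eq_mul] at hnn
    nlinarith [hnn]
  obtain ⟨hl, hr⟩ := abs_le.mp h1
  calc (∫ z, Ψ z * G z ∂m) ^ 2 ≤ c ^ 2 := sq_le_sq' hl hr
    _ ≤ _ := h2

section Core

variable {f : (∀ v, X v) → ℝ} {u : V → (∀ v, X v) → ℝ} {M : ℝ}

lemma integrand_meas (hfm : Measurable f) (hum : ∀ v, Measurable (u v)) (S : Finset V)
    (T : Finset V) :
    Measurable (fun x : ∀ p : V × Bool, X p.1 =>
      ∏ ω ∈ Om S, (f (sel x ω) * ∏ v ∈ T, u v (sel x ω))) :=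
  Finset.measurable_prod _ fun ω _ =>
    ((hfm.comp (measurable_sel ω)).mul
      (Finset.measurable_prod _ fun v _ => (hum v).comp (measurable_sel ω)))

lemma integrand_bound (hfb : ∀ x, |f x| ≤ M) (hub : ∀ v x, |u v x| ≤ 1) (S : Finset V)
    (T : Finset V) (x : ∀ p : V × Bool, X p.1) :
    |∏ ω ∈ Om S, (f (sel x ω) * ∏ v ∈ T, u v (sel x ω))| ≤
      max M 1 ^ 2 ^ Fintype.card V := by
  have hM1 : (0:ℝ) ≤ max M 1 := le_trans zero_le_one (le_max_right _ _)
  calc |∏ ω ∈ Om S, (f (sel x ω) * ∏ v ∈ T, u v (sel x ω))|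
      = ∏ ω ∈ Om S, |f (sel x ω) * ∏ v ∈ T, u v (sel x ω)| := Finset.abs_prod _ _
    _ ≤ ∏ _ω ∈ Om S, max M 1 := by
        refine Finset.prod_le_prod (fun _ _ => abs_nonneg _) fun ω _ => ?_
        rw [abs_mul]
        have h2 : |∏ v ∈ T, u v (sel x ω)| ≤ 1 := by
          rw [Finset.abs_prod]
          exact Finset.prod_le_one (fun _ _ => abs_nonneg _) fun v _ => hub v _
        calc |f (sel x ω)| * |∏ v ∈ T, u v (sel x ω)| ≤ max M 1 * 1 :=
              mul_le_mul ((hfb _).trans (le_max_left _ _)) h2 (abs_nonneg _) hM1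
          _ = max M 1 := mul_one _
    _ = max M 1 ^ (Om S).card := Finset.prod_const _
    _ ≤ max M 1 ^ 2 ^ Fintype.card V := by
        refine pow_le_pow_right₀ (le_max_right _ _) ?_
        calc (Om S).card ≤ Finset.univ.card := Finset.card_le_univ _
          _ = 2 ^ Fintype.card V := by
              rw [Finset.card_univ, Fintype.card_fun, Fintype.card_bool]

lemma key_step (hfm : Measurable f) (hfb : ∀ x, |f x| ≤ M)
    (hum : ∀ v, Measurable (u v)) (hub : ∀ v x, |u v x| ≤ 1)
    (hui : ∀ v (x y : ∀ w, X w), (∀ w, w ≠ v → x w = y w) → u v x = u v y)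
    (u₀ : V) (S : Finset V) (hu₀ : u₀ ∉ S) :
    CC μ f u S ^ 2 ≤ CC μ f u (insert u₀ S) := by
  classical
  obtain ⟨d⟩ : Nonempty (X u₀) := nonempty_of_prob (μ u₀)
  set B := max M 1 ^ 2 ^ Fintype.card V with hB
  have hM1 : (0:ℝ) ≤ max M 1 := le_trans zero_le_one (le_max_right _ _)
  have hB0 : (0:ℝ) ≤ B := pow_nonneg hM1 _
  set νZ := (Measure.pi fun q : {q : V × Bool // ¬ q.1 = u₀} => μ q.1.1) with hνZ
  set μ2 := ((μ u₀).prod (μ u₀)) with hμ2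
  set E := E0 (X := X) u₀ with hE
  have mp := E0_mp (μ := μ) u₀
  -- the three integrand functions on the doubled space
  set gphi : (∀ p : V × Bool, X p.1) → ℝ :=
    fun x => ∏ ω ∈ Om S, (f (sel x ω) * ∏ v ∈ (insert u₀ S)ᶜ, u v (sel x ω)) with hgphi
  set gpsi : (∀ p : V × Bool, X p.1) → ℝ :=
    fun x => ∏ ω ∈ Om S, u u₀ (sel x ω) with hgpsi
  -- selection identities
  have sel_eq : ∀ (z) (t t' : X u₀) (ω : V → Bool), ω u₀ = false →
      sel (E (z, (t, t'))) ω = sel (E (z, (t, t))) ω := by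
    intro z t t' ω hω
    funext v
    by_cases hv : v = u₀
    · subst hv
      show E (z, (t, t')) (v, ω v) = E (z, (t, t)) (v, ω v)
      rw [hω, hE, E0_apply_false, E0_apply_false]
    · show E (z, (t, t')) (v, ω v) = E (z, (t, t)) (v, ω v)
      rw [hE, E0_apply_ne u₀ _ _ _ _ hv, E0_apply_ne u₀ _ _ _ _ hv]
  have sel_eq' : ∀ (z) (t t' : X u₀) (ω : V → Bool), ω u₀ = false →
      sel (E (z, (t, t'))) (Function.update ω u₀ true) = sel (E (z, (t', t'))) ω := by
    intro z t t' ω hω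
    funext v
    by_cases hv : v = u₀
    · subst hv
      show E (z, (t, t')) (v, Function.update ω v true v) = E (z, (t', t')) (v, ω v)
      rw [Function.update_self, hω, hE, E0_apply_true, E0_apply_false]
    · show E (z, (t, t')) (v, Function.update ω u₀ true v) = E (z, (t', t')) (v, ω v)
      rw [Function.update_of_ne hv, hE, E0_apply_ne u₀ _ _ _ _ hv,
        E0_apply_ne u₀ _ _ _ _ hv]
  -- A, Ψ, G
  set A : (∀ q : {q : V × Bool // ¬ q.1 = u₀}, X q.1.1) → X u₀ → ℝ :=
    fun z t => gphi (E (z, (t, t))) with hA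
  set Ψ : (∀ q : {q : V × Bool // ¬ q.1 = u₀}, X q.1.1) → ℝ :=
    fun z => gpsi (E (z, (d, d))) with hΨdef
  have phi_eq : ∀ z (t t' : X u₀), gphi (E (z, (t, t'))) = A z t := by
    intro z t t'
    refine Finset.prod_congr rfl fun ω hω => ?_
    rw [sel_eq z t t' ω (mem_Om_false hu₀ hω)]
  have psi_eq : ∀ z (w : X u₀ × X u₀), gpsi (E (z, w)) = Ψ z := by
    intro z ⟨t, t'⟩
    refine Finset.prod_congr rfl fun ω hω => ?_
    refine hui u₀ _ _ fun w' hw' => ?_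
    show E (z, (t, t')) (w', ω w') = E (z, (d, d)) (w', ω w')
    rw [hE, E0_apply_ne u₀ _ _ _ _ hw', E0_apply_ne u₀ _ _ _ _ hw']
  -- splitting of the two integrands
  have gS_eq : ∀ z (w : X u₀ × X u₀),
      (∏ ω ∈ Om S, (f (sel (E (z, w)) ω) * ∏ v ∈ Sᶜ, u v (sel (E (z, w)) ω)))
        = A z w.1 * Ψ z := by
    intro z ⟨t, t'⟩
    have hsplit : ∀ x : ∀ p : V × Bool, X p.1,
        (∏ ω ∈ Om S, (f (sel x ω) * ∏ v ∈ Sᶜ, u v (sel x ω))) = gphi x * gpsi x := by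
      intro x
      rw [hgphi, hgpsi, ← Finset.prod_mul_distrib]
      refine Finset.prod_congr rfl fun ω _ => ?_
      have hmem : u₀ ∈ Sᶜ := Finset.mem_compl.mpr hu₀
      rw [Finset.compl_insert, ← Finset.mul_prod_erase _ _ hmem]
      ring
    rw [hsplit, phi_eq z t t', psi_eq z (t, t')]
  have gI_eq : ∀ z (w : X u₀ × X u₀),
      (∏ ω ∈ Om (insert u₀ S),
        (f (sel (E (z, w)) ω) * ∏ v ∈ (insert u₀ S)ᶜ, u v (sel (E (z, w)) ω)))
        = A z w.1 * A z w.2 := by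
    intro z ⟨t, t'⟩
    rw [prod_Om_insert hu₀]
    have h1 : (∏ ω ∈ Om S,
        (f (sel (E (z, (t, t'))) ω) * ∏ v ∈ (insert u₀ S)ᶜ, u v (sel (E (z, (t, t'))) ω)))
        = A z t := phi_eq z t t'
    have h2 : (∏ ω ∈ Om S,
        (f (sel (E (z, (t, t'))) (Function.update ω u₀ true)) *
          ∏ v ∈ (insert u₀ S)ᶜ, u v (sel (E (z, (t, t'))) (Function.update ω u₀ true))))
        = A z t' := by
      refine Finset.prod_congr rfl fun ω hω => ?_
      rw [sel_eq' z t t' ω (mem_Om_false hu₀ hω)]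
    rw [h1, h2]
  -- measurability and integrability
  have hmeasS := integrand_meas hfm hum S Sᶜ
  have hmeasI := integrand_meas hfm hum (insert u₀ S) (insert u₀ S)ᶜ
  have hmeasPhi : Measurable gphi := integrand_meas hfm hum S (insert u₀ S)ᶜ
  have hmeasPsi : Measurable gpsi :=
    Finset.measurable_prod _ fun ω _ => (hum u₀).comp (measurable_sel ω)
  have hmeasE : Measurable (E : _ → ∀ p : V × Bool, X p.1) := (E0 (X := X) u₀).measurable
  have hmeasAu : Measurable (fun p : (∀ q : {q : V × Bool // ¬ q.1 = u₀}, X q.1.1) × X u₀ =>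
      A p.1 p.2) := by
    apply hmeasPhi.comp
    exact hmeasE.comp (measurable_fst.prodMk (measurable_snd.prodMk measurable_snd))
  set G : (∀ q : {q : V × Bool // ¬ q.1 = u₀}, X q.1.1) → ℝ :=
    fun z => ∫ t, A z t ∂(μ u₀) with hG
  have hGsm : StronglyMeasurable G :=
    (hmeasAu.stronglyMeasurable).integral_prod_right'
  have hAbd : ∀ z t, |A z t| ≤ B := fun z t =>
    integrand_bound hfb hub S (insert u₀ S)ᶜ _
  have hΨbd : ∀ z, |Ψ z| ≤ 1 := by
    intro z
    rw [hΨdef, hgpsi, Finset.abs_prod]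
    exact Finset.prod_le_one (fun _ _ => abs_nonneg _) fun ω _ => hub u₀ _
  have hGbd : ∀ z, |G z| ≤ B := by
    intro z
    have h1 := norm_integral_le_integral_norm (μ := μ u₀) (fun t => A z t)
    simp only [Real.norm_eq_abs] at h1
    refine h1.trans ?_
    have hint : Integrable (fun t => |A z t|) (μ u₀) :=
      (integrable_of_bdd (c := B) (hmeasAu.comp (measurable_prodMk_left)) (hAbd z)).abs
    calc ∫ t, |A z t| ∂(μ u₀) ≤ ∫ _t, B ∂(μ u₀) :=
          integral_mono hint (integrable_const _) fun t => hAbd z t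
      _ = B := by simp [measure_univ]
  have hGint : Integrable G νZ := integrable_of_bdd hGsm.measurable hGbd
  have hG2int : Integrable (fun z => G z * G z) νZ := by
    refine integrable_of_bdd (hGsm.measurable.mul hGsm.measurable) (c := B * B) fun z => ?_
    rw [abs_mul]
    exact mul_le_mul (hGbd z) (hGbd z) (abs_nonneg _) hB0
  have hΨmeas : Measurable Ψ := by
    apply hmeasPsi.comp
    exact hmeasE.comp (measurable_id.prodMk measurable_const)
  have hΨGint : Integrable (fun z => Ψ z * G z) νZ := by
    refine integrable_of_bdd (hΨmeas.mul hGsm.measurable) (c := 1 * B) fun z => ?_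
    rw [abs_mul]
    exact mul_le_mul (hΨbd z) (hGbd z) (abs_nonneg _) zero_le_one
  -- express CC S
  have expS : CC μ f u S = ∫ z, Ψ z * G z ∂νZ := by
    unfold CC
    rw [← mp.map_eq,
      integral_map mp.measurable.aemeasurable hmeasS.aestronglyMeasurable]
    have hintS : Integrable (fun p => ∏ ω ∈ Om S,
        (f (sel (E p) ω) * ∏ v ∈ Sᶜ, u v (sel (E p) ω))) (νZ.prod μ2) :=
      integrable_of_bdd (hmeasS.comp hmeasE) fun p => integrand_bound hfb hub S Sᶜ _
    rw [integral_prod _ hintS]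
    refine integral_congr_ae (Filter.Eventually.of_forall fun z => ?_)
    calc (∫ w, ∏ ω ∈ Om S, (f (sel (E (z, w)) ω) * ∏ v ∈ Sᶜ, u v (sel (E (z, w)) ω)) ∂μ2)
        = ∫ w : X u₀ × X u₀, (fun t => A z t * Ψ z) w.1 * (fun _ : X u₀ => (1:ℝ)) w.2 ∂μ2 := by
          refine integral_congr_ae (Filter.Eventually.of_forall fun w => ?_)
          dsimp only
          rw [gS_eq z w, mul_one]
      _ = (∫ t, A z t * Ψ z ∂(μ u₀)) * ∫ _t, (1:ℝ) ∂(μ u₀) := by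
          rw [hμ2]; exact integral_prod_mul (L := ℝ) (fun t => A z t * Ψ z) (fun _ => (1:ℝ))
      _ = Ψ z * G z := by
          rw [integral_mul_const, integral_const]
          simp only [measure_univ, probReal_univ, ENNReal.toReal_one, one_smul, smul_eq_mul, one_mul, mul_one]
          exact mul_comm _ _
  -- express CC (insert u₀ S)
  have expI : CC μ f u (insert u₀ S) = ∫ z, G z * G z ∂νZ := by
    unfold CC
    rw [← mp.map_eq,
      integral_map mp.measurable.aemeasurable hmeasI.aestronglyMeasurable]
    have hintI : Integrable (fun p => ∏ ω ∈ Om (insert u₀ S),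
        (f (sel (E p) ω) * ∏ v ∈ (insert u₀ S)ᶜ, u v (sel (E p) ω))) (νZ.prod μ2) :=
      integrable_of_bdd (hmeasI.comp hmeasE)
        fun p => integrand_bound hfb hub (insert u₀ S) (insert u₀ S)ᶜ _
    rw [integral_prod _ hintI]
    refine integral_congr_ae (Filter.Eventually.of_forall fun z => ?_)
    calc (∫ w, ∏ ω ∈ Om (insert u₀ S),
          (f (sel (E (z, w)) ω) * ∏ v ∈ (insert u₀ S)ᶜ, u v (sel (E (z, w)) ω)) ∂μ2)
        = ∫ w : X u₀ × X u₀, (fun t => A z t) w.1 * (fun t => A z t) w.2 ∂μ2 := by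
          refine integral_congr_ae (Filter.Eventually.of_forall fun w => ?_)
          dsimp only
          rw [gI_eq z w]
      _ = (∫ t, A z t ∂(μ u₀)) * ∫ t, A z t ∂(μ u₀) := by
          rw [hμ2]; exact integral_prod_mul (L := ℝ) (fun t => A z t) (fun t => A z t)
      _ = G z * G z := rfl
  rw [expS, expI]
  exact cs_aux hGint hG2int hΨGint hΨbd

end Core

section Chain

variable {f : (∀ v, X v) → ℝ} {u : V → (∀ v, X v) → ℝ} {M : ℝ}

lemma chain (hfm : Measurable f) (hfb : ∀ x, |f x| ≤ M)
    (hum : ∀ v, Measurable (u v)) (hub : ∀ v x, |u v x| ≤ 1)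
    (hui : ∀ v (x y : ∀ w, X w), (∀ w, w ≠ v → x w = y w) → u v x = u v y)
    (S : Finset V) (hS : S.Nonempty) :
    |CC μ f u ∅| ^ 2 ^ S.card ≤ CC μ f u S := by
  induction hS using Finset.Nonempty.cons_induction with
  | singleton a =>
    have h := key_step (μ := μ) hfm hfb hum hub hui a ∅ (Finset.notMem_empty a)
    rw [Finset.card_singleton, pow_one, sq_abs]
    simpa using h
  | cons a s ha hs ih =>
    rw [Finset.card_cons, pow_succ, pow_mul]
    have h1 : (|CC μ f u ∅| ^ 2 ^ s.card) ^ 2 ≤ (CC μ f u s) ^ 2 :=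
      pow_le_pow_left₀ (pow_nonneg (abs_nonneg _) _) ih 2
    refine h1.trans ?_
    have h2 := key_step (μ := μ) hfm hfb hum hub hui a s ha
    rwa [Finset.cons_eq_insert]

lemma CC_univ : CC μ f u Finset.univ = boxInt X μ f := by
  unfold CC boxInt
  refine integral_congr_ae (Filter.Eventually.of_forall fun x => ?_)
  dsimp only
  rw [show (∏ ω : V → Bool, f fun v => x (v, ω v)) = ∏ ω ∈ Om Finset.univ,
    f (sel x ω) from by rw [Om_univ]; rfl]
  refine Finset.prod_congr rfl fun ω _ => ?_
  rw [Finset.compl_univ, Finset.prod_empty, mul_one]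

/-- Reindexing `V` into the `false` coordinates. -/
def γe : V ≃ {q : V × Bool // q.2 = false} where
  toFun v := ⟨(v, false), rfl⟩
  invFun q := q.1.1
  left_inv v := rfl
  right_inv q := by
    rcases q with ⟨⟨v, b⟩, h⟩
    have : b = false := h
    subst this
    rfl

lemma proj_mp :
    MeasurePreserving (fun x : ∀ p : V × Bool, X p.1 => (fun v => x (v, false) : ∀ v, X v))
      (Measure.pi fun p : V × Bool => μ p.1) (Measure.pi μ) := by
  classical
  have mp1 := measurePreserving_piEquivPiSubtypeProd (fun p : V × Bool => μ p.1)
    (fun q : V × Bool => q.2 = false)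
  have mp2 : MeasurePreserving
      (Prod.fst : (∀ q : {q : V × Bool // q.2 = false}, X q.1.1) ×
        (∀ q : {q : V × Bool // ¬ q.2 = false}, X q.1.1) → _)
      ((Measure.pi fun q : {q : V × Bool // q.2 = false} => μ q.1.1).prod
        (Measure.pi fun q : {q : V × Bool // ¬ q.2 = false} => μ q.1.1))
      (Measure.pi fun q : {q : V × Bool // q.2 = false} => μ q.1.1) := by
    constructor
    · exact measurable_fst
    · rw [Measure.map_fst_prod]
      simp [measure_univ]
  have mp3 := (measurePreserving_piCongrLeft
    (fun q : {q : V × Bool // q.2 = false} => μ q.1.1) (γe (V := V))).symm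
    (MeasurableEquiv.piCongrLeft (fun q : {q : V × Bool // q.2 = false} => X q.1.1) γe)
  have hcomp := mp3.comp (mp2.comp mp1)
  have hfun : (⇑(MeasurableEquiv.piCongrLeft
        (fun q : {q : V × Bool // q.2 = false} => X q.1.1) γe).symm ∘
      (Prod.fst ∘ ⇑(MeasurableEquiv.piEquivPiSubtypeProd (fun p : V × Bool => X p.1)
        (fun q : V × Bool => q.2 = false)))) =
      fun x : ∀ p : V × Bool, X p.1 => (fun v => x (v, false) : ∀ v, X v) := by
    funext x
    show (Equiv.piCongrLeft (fun q : {q : V × Bool // q.2 = false} => X q.1.1) γe).symm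
      (fun q : {q : V × Bool // q.2 = false} => x q.1) = fun v => x (v, false)
    funext v
    rw [Equiv.piCongrLeft_symm_apply]
    rfl
  rw [hfun] at hcomp
  exact hcomp

lemma CC_empty (hfm : Measurable f) (hum : ∀ v, Measurable (u v)) :
    CC μ f u ∅ = ∫ x, f x * ∏ v, u v x ∂(Measure.pi μ) := by
  have hmeas : Measurable (fun x : ∀ v, X v => f x * ∏ v, u v x) :=
    hfm.mul (Finset.measurable_prod _ fun v _ => hum v)
  have mp := proj_mp (μ := μ)
  rw [← mp.map_eq, integral_map mp.measurable.aemeasurable hmeas.aestronglyMeasurable]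
  unfold CC
  rw [Om_empty]
  simp only [Finset.prod_singleton, Finset.compl_empty]
  rfl

lemma boxInt_ge [Nonempty V] (hfm : Measurable f) (hfb : ∀ x, |f x| ≤ M)
    (hum : ∀ v, Measurable (u v)) (hub : ∀ v x, |u v x| ≤ 1)
    (hui : ∀ v (x y : ∀ w, X w), (∀ w, w ≠ v → x w = y w) → u v x = u v y) :
    |∫ x, f x * ∏ v, u v x ∂(Measure.pi μ)| ^ 2 ^ Fintype.card V ≤ boxInt X μ f := by
  have h := chain (μ := μ) hfm hfb hum hub hui Finset.univ Finset.univ_nonempty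
  rw [Finset.card_univ] at h
  rw [← CC_univ (μ := μ) (f := f) (u := u), ← CC_empty (μ := μ) hfm hum]
  exact h

end Chain

section Final

variable {f : (∀ v, X v) → ℝ} {M : ℝ}

lemma boxInt_nonneg [Nonempty V] (hfm : Measurable f) (hfb : ∀ x, |f x| ≤ M) :
    0 ≤ boxInt X μ f := by
  have h := boxInt_ge (μ := μ) (u := fun _ _ => 1) hfm hfb
    (fun v => measurable_const) (fun v x => by norm_num) (fun v x y _ => rfl)
  exact le_trans (pow_nonneg (abs_nonneg _) _) h

lemma int_mul_eq_zero [Nonempty V] (hfm : Measurable f)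
    (hfb : ∀ x, |f x| ≤ M) {u : V → (∀ v, X v) → ℝ}
    (hum : ∀ v, Measurable (u v)) (hub : ∀ v x, |u v x| ≤ 1)
    (hui : ∀ v (x y : ∀ w, X w), (∀ w, w ≠ v → x w = y w) → u v x = u v y)
    (hbox : boxInt X μ f = 0) :
    ∫ x, f x * ∏ v, u v x ∂(Measure.pi μ) = 0 := by
  have h := boxInt_ge (μ := μ) hfm hfb hum hub hui
  rw [hbox] at h
  have h0 : |∫ x, f x * ∏ v, u v x ∂(Measure.pi μ)| ^ 2 ^ Fintype.card V = 0 :=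
    le_antisymm h (pow_nonneg (abs_nonneg _) _)
  have h1 := pow_eq_zero_iff (n := 2 ^ Fintype.card V) (by positivity) |>.mp h0
  exact abs_eq_zero.mp h1

lemma finRotate_ne {n : ℕ} (hn : 2 ≤ n) (i : Fin n) : finRotate n i ≠ i := by
  rcases n with _ | m
  · omega
  · rw [finRotate_succ_apply]
    intro h
    have hval := congrArg Fin.val h
    rw [Fin.val_add_one] at hval
    split_ifs at hval with hl
    · have h2 : i.val = m := by rw [hl]; rfl
      omega
    · omega

lemma setIntegral_rect_eq_zero [Nonempty V] (hfm : Measurable f) (hfb : ∀ x, |f x| ≤ M)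
    (hcard : 2 ≤ Fintype.card V) (hbox : boxInt X μ f = 0)
    (A : ∀ v, Set (X v)) (hA : ∀ v, MeasurableSet (A v)) :
    ∫ x in Set.univ.pi A, f x ∂(Measure.pi μ) = 0 := by
  classical
  set σ : V ≃ V :=
    (Fintype.equivFin V).trans ((finRotate _).trans (Fintype.equivFin V).symm) with hσ
  have hσne : ∀ v, σ v ≠ v := by
    intro v h
    have h2 : finRotate (Fintype.card V) ((Fintype.equivFin V) v) = (Fintype.equivFin V) v := by
      have h3 := congrArg (Fintype.equivFin V) h
      simpa [hσ] using h3
    exact finRotate_ne hcard _ h2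
  set u : V → (∀ v, X v) → ℝ :=
    fun v x => Set.indicator (A (σ v)) (fun _ => (1:ℝ)) (x (σ v)) with hu
  have hum : ∀ v, Measurable (u v) :=
    fun v => (measurable_const.indicator (hA (σ v))).comp (measurable_pi_apply (σ v))
  have hub : ∀ v x, |u v x| ≤ 1 := by
    intro v x
    rw [hu]
    by_cases hm : x (σ v) ∈ A (σ v)
    · simp [Set.indicator_of_mem hm]
    · simp [Set.indicator_of_notMem hm]
  have hui : ∀ v (x y : ∀ w, X w), (∀ w, w ≠ v → x w = y w) → u v x = u v y := by
    intro v x y hxy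
    rw [hu]
    dsimp only
    rw [hxy (σ v) (hσne v)]
  have hprod : ∀ x : ∀ v, X v,
      (∏ v, u v x) = Set.indicator (Set.univ.pi A) (fun _ => (1:ℝ)) x := by
    intro x
    have hre : (∏ v, u v x) = ∏ v, Set.indicator (A v) (fun _ => (1:ℝ)) (x v) :=
      Equiv.prod_comp σ fun w => Set.indicator (A w) (fun _ => (1:ℝ)) (x w)
    rw [hre]
    by_cases hx : x ∈ Set.univ.pi A
    · rw [Set.indicator_of_mem hx]
      have hmem : ∀ v, x v ∈ A v := fun v => (Set.mem_univ_pi.mp hx) v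
      calc (∏ v, Set.indicator (A v) (fun _ => (1:ℝ)) (x v)) = ∏ _v : V, (1:ℝ) :=
            Finset.prod_congr rfl fun v _ => Set.indicator_of_mem (hmem v) _
        _ = 1 := Finset.prod_const_one
    · rw [Set.indicator_of_notMem hx]
      obtain ⟨v0, hv0⟩ : ∃ v, x v ∉ A v := by
        by_contra hcon
        push_neg at hcon
        exact hx (Set.mem_univ_pi.mpr hcon)
      exact Finset.prod_eq_zero (Finset.mem_univ v0) (Set.indicator_of_notMem hv0 _)
  have h0 := int_mul_eq_zero (μ := μ) hfm hfb hum hub hui hbox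
  rw [← integral_indicator (MeasurableSet.univ_pi hA)]
  refine Eq.trans (integral_congr_ae (Filter.Eventually.of_forall fun x => ?_)) h0
  rw [hprod x]
  by_cases hx : x ∈ Set.univ.pi A
  · rw [Set.indicator_of_mem hx, Set.indicator_of_mem hx, mul_one]
  · rw [Set.indicator_of_notMem hx, Set.indicator_of_notMem hx, mul_zero]

end Final

section AeZero

variable {f : (∀ v, X v) → ℝ} {M : ℝ}

lemma f_ae_zero [Nonempty V] (hfm : Measurable f) (hfb : ∀ x, |f x| ≤ M)
    (hcard : 2 ≤ Fintype.card V) (hbox : boxInt X μ f = 0) :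
    f =ᵐ[Measure.pi μ] 0 := by
  have hint : Integrable f (Measure.pi μ) := integrable_of_bdd hfm hfb
  have huniv : ∫ x, f x ∂(Measure.pi μ) = 0 := by
    have h := setIntegral_rect_eq_zero (μ := μ) hfm hfb hcard hbox
      (fun _ => Set.univ) (fun _ => MeasurableSet.univ)
    rw [Set.pi_univ] at h
    rwa [setIntegral_univ] at h
  have key : ∀ ⦃t : Set (∀ v, X v)⦄, MeasurableSet t →
      ∫ x in t, f x ∂(Measure.pi μ) = 0 := by
    intro t ht
    refine MeasurableSpace.induction_on_inter (m := MeasurableSpace.pi)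
      (C := fun t _ => ∫ x in t, f x ∂(Measure.pi μ) = 0)
      (s := Set.pi Set.univ '' Set.pi Set.univ fun i => {s : Set (X i) | MeasurableSet s})
      generateFrom_pi.symm isPiSystem_pi ?_ ?_ ?_ ?_ t ht
    · simp
    · rintro t ⟨A, hA, rfl⟩
      exact setIntegral_rect_eq_zero (μ := μ) hfm hfb hcard hbox A
        (fun v => hA v (Set.mem_univ v))
    · intro t ht h0t
      have hadd := integral_add_compl ht hint
      rw [h0t, huniv] at hadd
      linarith
    · intro g hdisj hmeas hzero
      rw [integral_iUnion hmeas hdisj hint.integrableOn]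
      simp [hzero]
  exact hint.ae_eq_zero_of_forall_setIntegral_eq_zero fun s hs _ => key hs

end AeZero

section Sigma

lemma cylAlgLt_eq_bot (h1 : Fintype.card V = 1) : cylAlgLt X = ⊥ := by
  refine le_antisymm ?_ bot_le
  refine iSup_le fun I => iSup_le fun hI => ?_
  have hIe : I = ∅ := by
    by_contra hne
    obtain ⟨b, hb⟩ := Set.nonempty_iff_ne_empty.mpr hne
    apply hI
    ext c
    simp only [Set.mem_univ, iff_true]
    obtain ⟨a, ha⟩ := Fintype.card_eq_one_iff.mp h1
    rwa [ha c, ← ha b]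
  subst hIe
  have hE : IsEmpty ↥(∅ : Set V) := Set.isEmpty_coe_sort.mpr rfl
  have hpi : (MeasurableSpace.pi : MeasurableSpace (∀ i : ↥(∅ : Set V), X ↑i)) = ⊥ :=
    le_antisymm (iSup_le fun i => hE.elim i) bot_le
  show MeasurableSpace.comap _ (MeasurableSpace.pi
    (m := fun i : ↥(∅ : Set V) => inferInstance)) ≤ ⊥
  rw [hpi, MeasurableSpace.comap_bot]

lemma pi_le_cylAlgLt (hcard : 2 ≤ Fintype.card V) :
    (MeasurableSpace.pi : MeasurableSpace (∀ v, X v)) ≤ cylAlgLt X := by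
  refine iSup_le fun v => ?_
  obtain ⟨w, hw⟩ := Fintype.exists_ne_of_one_lt_card (by omega) v
  have hvI : v ∈ {u | u ≠ w} := Ne.symm hw
  have hIne : ({u | u ≠ w} : Set V) ≠ Set.univ := by
    intro hc
    have : w ∈ ({u | u ≠ w} : Set V) := hc ▸ Set.mem_univ w
    exact this rfl
  have hco : (fun x : ∀ v, X v => x v) =
      (fun g : ∀ i : ↥({u | u ≠ w} : Set V), X ↑i => g ⟨v, hvI⟩) ∘
        (fun (x : ∀ v, X v) (i : ↥({u | u ≠ w} : Set V)) => x ↑i) := rfl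
  have h1 : MeasurableSpace.comap (fun x : ∀ v, X v => x v) inferInstance ≤
      cylAlg X {u | u ≠ w} := by
    rw [hco, ← MeasurableSpace.comap_comp]
    refine MeasurableSpace.comap_mono ?_
    exact le_iSup (fun i : ↥({u | u ≠ w} : Set V) =>
      MeasurableSpace.comap (fun g : ∀ j : ↥({u | u ≠ w} : Set V), X ↑j => g i)
        inferInstance) ⟨v, hvI⟩
  exact h1.trans (le_iSup₂ (f := fun (I : Set V) (_ : I ≠ Set.univ) => cylAlg X I)
    {u | u ≠ w} hIne)

end Sigma

end BoxAux


/-- If `‖E[f | 𝒞_{<V}]‖_{L²(μ)} > 0` then `‖f‖_{□^V} > 0`. -/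
theorem boxNorm_pos_of_condexp (V : Type) [Fintype V] [DecidableEq V] [Nonempty V]
    (X : V → Type) [∀ v, MeasurableSpace (X v)]
    (μ : ∀ v, Measure (X v)) [∀ v, IsProbabilityMeasure (μ v)]
    (f : (∀ v, X v) → ℝ) (hfb : ∃ C, ∀ x, |f x| ≤ C) (hfm : Measurable f)
    (h : 0 < eLpNorm (MeasureTheory.condExp (cylAlgLt X) (Measure.pi μ) f) 2
        (Measure.pi μ)) :
    0 < boxNorm X μ f := by
  classical
  obtain ⟨M, hfb⟩ := hfb
  have hpos : 0 < boxInt X μ f := by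
    have hnn := BoxAux.boxInt_nonneg (μ := μ) hfm hfb
    rcases lt_or_eq_of_le hnn with hlt | heq
    · exact hlt
    · exfalso
      have hbox : boxInt X μ f = 0 := heq.symm
      rcases Nat.lt_or_ge (Fintype.card V) 2 with hc | hc
      · -- |V| = 1 : the σ-algebra is trivial
        have h1 : Fintype.card V = 1 := by
          have h2 := Fintype.card_pos (α := V)
          omega
        rw [BoxAux.cylAlgLt_eq_bot (X := X) h1, MeasureTheory.condExp_bot] at h
        by_cases hz : ∫ x, f x ∂(Measure.pi μ) = 0
        · rw [hz] at h
          simp only [eLpNorm_zero'] at h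
          exact lt_irrefl _ h
        · have hge := BoxAux.boxInt_ge (μ := μ) (u := fun _ _ => (1:ℝ)) hfm hfb
            (fun v => measurable_const) (fun v x => by norm_num) (fun v x y _ => rfl)
          have hsimp : (fun x : ∀ v, X v =>
              f x * ∏ v : V, (fun (_ : V) (_ : ∀ w, X w) => (1:ℝ)) v x) = f := by
            funext x; simp
          rw [hsimp, hbox] at hge
          have hp := pow_pos (abs_pos.mpr hz) (2 ^ Fintype.card V)
          linarith
      · -- |V| ≥ 2 : f vanishes a.e.
        have hae := BoxAux.f_ae_zero (μ := μ) hfm hfb hc hbox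
        have hc1 : MeasureTheory.condExp (cylAlgLt X) (Measure.pi μ) f
            =ᵐ[Measure.pi μ] MeasureTheory.condExp (cylAlgLt X) (Measure.pi μ) 0 :=
          condExp_congr_ae hae
        rw [condExp_zero] at hc1
        rw [eLpNorm_congr_ae hc1] at h
        simp only [eLpNorm_zero] at h
        exact lt_irrefl _ h
  unfold boxNorm
  exact Real.rpow_pos_of_pos hpos _
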